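/- Let μ = E ξ < ∞ and N the renewal counting process with first-passage time N(t) = inf{k : S_k > t}. Then for every n ∈ ℕ, μ E|N(μn) − n| = E(S_{N(μn)∨n} − S_{N(μn)∧n}) = E(|S_n − μn| ± (S_{N(μn)} − μn)) sandwiched as: E(|S_n − μn|) − E(S_{N(μn)} − μn) ≤ μ E|N(μn) − n| ≤ E(|S_n − μn|) + E(S_{N(μn)} − μn). -/

import Mathlib

open MeasureTheory Filter

private lemma measurable_sInf_lt {Ω : Type*} [MeasurableSpace Ω] (t : ℝ) (S : ℕ → Ω → ℝ)
    (hSmeas : ∀ k, Measurable (S k)) :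
    Measurable (fun ω => sInf {k : ℕ | t < S k ω}) := by
  apply measurable_to_countable'
  intro m
  have : (fun ω => sInf {k : ℕ | t < S k ω}) ⁻¹' {m} =
      if m = 0 then ({ω | t < S 0 ω} ∪ {ω | ∀ k, ¬ t < S k ω})
      else ({ω | t < S m ω} ∩ ⋂ j < m, {ω | ¬ t < S j ω}) := by
    ext ω
    by_cases hm : m = 0
    · subst hm
      simp only [Set.mem_preimage, Set.mem_singleton_iff, if_pos rfl, Set.mem_union,
        Set.mem_setOf_eq, Nat.sInf_eq_zero]
      constructor
      · rintro (h | h)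
        · exact Or.inl h
        · exact Or.inr fun k hk => Set.eq_empty_iff_forall_notMem.1 h k hk
      · rintro (h | h)
        · exact Or.inl h
        · exact Or.inr (Set.eq_empty_iff_forall_notMem.2 fun k hk => h k hk)
    · simp only [Set.mem_preimage, Set.mem_singleton_iff, if_neg hm, Set.mem_inter_iff,
        Set.mem_setOf_eq, Set.mem_iInter]
      constructor
      · rintro rfl
        have hne : {k : ℕ | t < S k ω}.Nonempty := by
          by_contra h
          rw [Set.not_nonempty_iff_eq_empty] at h
          exact hm (by rw [h]; simp)
        exact ⟨Nat.sInf_mem hne, fun j hj => Nat.notMem_of_lt_sInf hj⟩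
      · rintro ⟨h1, h2⟩
        refine le_antisymm (Nat.sInf_le h1) (le_of_not_gt fun h => ?_)
        exact h2 _ h (show sInf {k : ℕ | t < S k ω} ∈ {k : ℕ | t < S k ω} from
          Nat.sInf_mem ⟨m, h1⟩)
  rw [this]
  split
  · refine (measurableSet_lt measurable_const (hSmeas 0)).union ?_
    have : {ω | ∀ k, ¬ t < S k ω} = ⋂ k, {ω : Ω | t < S k ω}ᶜ := by
      ext ω; simp
    rw [this]
    exact MeasurableSet.iInter fun k => (measurableSet_lt measurable_const (hSmeas k)).compl
  · refine (measurableSet_lt measurable_const (hSmeas m)).inter ?_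
    refine MeasurableSet.iInter fun j => MeasurableSet.iInter fun _ => ?_
    have : {ω | ¬ t < S j ω} = {ω : Ω | t < S j ω}ᶜ := rfl
    rw [this]
    exact (measurableSet_lt measurable_const (hSmeas j)).compl

private theorem wald_aux
    {Ω : Type*} [MeasurableSpace Ω] (P : Measure Ω) [IsProbabilityMeasure P]
    (ξ : ℕ → Ω → ℝ) (hmeas : ∀ i, Measurable (ξ i))
    (hindep : ProbabilityTheory.iIndepFun ξ P)
    (hident : ∀ i, P.map (ξ i) = P.map (ξ 0))
    (hpos : ∀ i, ∀ᵐ ω ∂P, 0 < ξ i ω)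
    (hInt : Integrable (ξ 0) P)
    (μ : ℝ) (hμpos : 0 < μ) (hmean : ∫ ω, ξ 0 ω ∂P = μ)
    (n : ℕ)
    (S : ℕ → Ω → ℝ) (hS : ∀ k ω, S k ω = ∑ i ∈ Finset.range k, ξ i ω)
    (N : Ω → ℕ) (hN : ∀ ω, N ω = sInf {k : ℕ | μ * n < S k ω}) :
    (μ * ∫ ω, |(N ω : ℝ) - n| ∂P =
      ∫ ω, (S (max (N ω) n) ω - S (min (N ω) n) ω) ∂P) ∧
    ((∫ ω, |S n ω - μ * n| ∂P) - ((∫ ω, S (N ω) ω ∂P) - μ * n) ≤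
      μ * ∫ ω, |(N ω : ℝ) - n| ∂P) ∧
    (μ * ∫ ω, |(N ω : ℝ) - n| ∂P ≤
      (∫ ω, |S n ω - μ * n| ∂P) + ((∫ ω, S (N ω) ω ∂P) - μ * n)) := by
  classical
  set t : ℝ := μ * n with ht
  have ht0 : 0 ≤ t := mul_nonneg hμpos.le (Nat.cast_nonneg n)
  -- basic measurability
  have hSmeas : ∀ k, Measurable (S k) := by
    intro k
    simp only [funext fun ω => hS k ω]
    exact Finset.measurable_sum _ fun i _ => hmeas i
  have hNmeas : Measurable N := by
    have : N = fun ω => sInf {k : ℕ | t < S k ω} := funext hN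
    rw [this]
    exact measurable_sInf_lt t S hSmeas
  have hSNmeas : ∀ (M : Ω → ℕ), Measurable M → Measurable (fun ω => S (M ω) ω) := by
    intro M hM
    have : (fun ω => S (M ω) ω) = (fun p : Ω × ℕ => S p.2 p.1) ∘ fun ω => (ω, M ω) := rfl
    rw [this]
    exact (measurable_from_prod_countable_left fun k => hSmeas k).comp (measurable_id.prodMk hM)
  -- identical distribution consequences
  have hident_f : ∀ (f : ℝ → ℝ), Measurable f →
      ∀ i, ∫ ω, f (ξ i ω) ∂P = ∫ ω, f (ξ 0 ω) ∂P := by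
    intro f hf i
    rw [← integral_map (hmeas i).aemeasurable hf.aestronglyMeasurable, hident i,
      integral_map (hmeas 0).aemeasurable hf.aestronglyMeasurable]
  have hInt_i : ∀ i, Integrable (ξ i) P := by
    intro i
    have h0 : Integrable id (P.map (ξ 0)) := by
      rw [integrable_map_measure aestronglyMeasurable_id (hmeas 0).aemeasurable]
      exact hInt
    exact (integrable_map_measure aestronglyMeasurable_id (hmeas i).aemeasurable).1
      (by rw [hident i]; exact h0)
  have hmean_i : ∀ i, ∫ ω, ξ i ω ∂P = μ := by
    intro i
    rw [← hmean]
    exact hident_f id measurable_id i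
  -- Chernoff bound
  set r : ℝ := ∫ ω, Real.exp (-ξ 0 ω) ∂P with hr
  have hexp : ∀ i, ∫ ω, Real.exp (-ξ i ω) ∂P = r :=
    fun i => hident_f (fun x => Real.exp (-x)) (Real.measurable_exp.comp measurable_neg) i
  have hη_int : ∀ i, Integrable (fun ω => Real.exp (-ξ i ω)) P := by
    intro i
    refine Integrable.mono' (integrable_const 1)
      ((Real.measurable_exp.comp (hmeas i).neg).aestronglyMeasurable) ?_
    filter_upwards [hpos i] with ω hω
    rw [Real.norm_eq_abs, abs_of_pos (Real.exp_pos _)]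
    exact Real.exp_le_one_iff.2 (by linarith)
  have hr0 : 0 ≤ r := integral_nonneg fun ω => (Real.exp_pos _).le
  have hr1 : r < 1 := by
    have hle : r ≤ 1 := by
      calc r ≤ ∫ _ω, (1:ℝ) ∂P := by
              apply integral_mono_ae (hη_int 0) (integrable_const 1)
              filter_upwards [hpos 0] with ω hω
              exact Real.exp_le_one_iff.2 (by linarith)
        _ = 1 := by simp
    rcases lt_or_eq_of_le hle with h | h
    · exact h
    exfalso
    have hzero : ∫ ω, (1 - Real.exp (-ξ 0 ω)) ∂P = 0 := by
      rw [integral_sub (integrable_const 1) (hη_int 0)]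
      simp only [integral_const, measure_univ, ENNReal.toReal_one, smul_eq_mul, one_mul, ← hr, h,
        sub_self, probReal_univ]
    have hnonneg : 0 ≤ᵐ[P] fun ω => 1 - Real.exp (-ξ 0 ω) := by
      filter_upwards [hpos 0] with ω hω
      simp only [Pi.zero_apply, sub_nonneg]
      exact Real.exp_le_one_iff.2 (by linarith)
    have hae := (integral_eq_zero_iff_of_nonneg_ae hnonneg
      ((integrable_const 1).sub (hη_int 0))).1 hzero
    have hbad : ∀ᵐ ω ∂P, False := by
      filter_upwards [hpos 0, hae] with ω hω h2
      simp only [Pi.zero_apply] at h2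
      have : Real.exp (-ξ 0 ω) = 1 := by linarith
      rw [Real.exp_eq_one_iff] at this
      linarith
    have h0 : P = 0 := by simpa using hbad
    have : (1 : ENNReal) = 0 := by rw [← measure_univ (μ := P), h0]; simp
    exact one_ne_zero this
  have hSint : ∀ k, Integrable (fun ω => Real.exp (-(S k ω))) P := by
    intro k
    refine Integrable.mono' (integrable_const 1)
      ((Real.measurable_exp.comp (hSmeas k).neg).aestronglyMeasurable) ?_
    filter_upwards [ae_all_iff.2 hpos] with ω hω
    rw [Real.norm_eq_abs, abs_of_pos (Real.exp_pos _)]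
    refine Real.exp_le_one_iff.2 ?_
    simp only [neg_nonpos, hS]
    exact Finset.sum_nonneg fun i _ => (hω i).le
  have hprod : ∀ k, ∫ ω, Real.exp (-(S k ω)) ∂P = r ^ k := by
    intro k
    induction k with
    | zero => simp [hS]
    | succ k ih =>
      have hSprod : ∀ m, (fun ω => Real.exp (-(S m ω)))
          = fun ω => ∏ j ∈ Finset.range m, Real.exp (-ξ j ω) := by
        intro m; funext ω
        rw [hS, ← Real.exp_sum]
        congr 1
        rw [Finset.sum_neg_distrib]
      have hindepk : ProbabilityTheory.IndepFun
          (fun ω => Real.exp (-(S k ω))) (fun ω => Real.exp (-ξ k ω)) P := by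
        rw [hSprod k]
        have hcomp : ProbabilityTheory.iIndepFun
            (fun i ω => Real.exp (-ξ i ω)) P :=
          hindep.comp (fun _ => fun x => Real.exp (-x))
            fun _ => Real.measurable_exp.comp measurable_neg
        have := hcomp.indepFun_finset_prod_of_notMem
          (fun i => Real.measurable_exp.comp (hmeas i).neg)
          (s := Finset.range k) (i := k) (by simp)
        convert this using 1
        ext ω; simp [Finset.prod_apply]
      have heq : (fun ω => Real.exp (-(S (k+1) ω)))
          = (fun ω => Real.exp (-(S k ω))) * fun ω => Real.exp (-ξ k ω) := by
        funext ω
        simp only [Pi.mul_apply, hS, Finset.sum_range_succ, ← Real.exp_add]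
        ring_nf
      rw [heq, hindepk.integral_mul_eq_mul_integral (hSint k).aestronglyMeasurable (hη_int k).aestronglyMeasurable, ih, hexp k]
      rw [pow_succ]
  have hmarkov : ∀ k, (P {ω | S k ω ≤ t}).toReal ≤ Real.exp t * r ^ k := by
    intro k
    have hsub : {ω | S k ω ≤ t} ⊆ {ω | Real.exp (-t) ≤ Real.exp (-(S k ω))} := by
      intro ω hω
      exact Real.exp_le_exp.2 (by simpa using hω)
    have hm := mul_meas_ge_le_integral_of_nonneg
      (ae_of_all P fun ω => (Real.exp_pos (-(S k ω))).le) (hSint k) (Real.exp (-t))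
    rw [hprod k] at hm
    have hmono : (P {ω | S k ω ≤ t}).toReal
        ≤ (P {ω | Real.exp (-t) ≤ Real.exp (-(S k ω))}).toReal :=
      ENNReal.toReal_mono (measure_ne_top _ _) (measure_mono hsub)
    have hpos' : (0:ℝ) < Real.exp (-t) := Real.exp_pos _
    calc (P {ω | S k ω ≤ t}).toReal
        ≤ (P {ω | Real.exp (-t) ≤ Real.exp (-(S k ω))}).toReal := hmono
      _ ≤ r ^ k / Real.exp (-t) := by
          rw [le_div_iff₀ hpos']
          simp only [measureReal_def] at hm
          linarith [hm]
      _ = Real.exp t * r ^ k := by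
          rw [Real.exp_neg, div_eq_mul_inv, inv_inv, mul_comm]
  -- the hitting set is a.e. nonempty
  have hNE : ∀ᵐ ω ∂P, ∃ k, t < S k ω := by
    have hE : P (⋂ k, {ω | S k ω ≤ t}) = 0 := by
      have hle : ∀ k, (P (⋂ k, {ω | S k ω ≤ t})).toReal ≤ Real.exp t * r ^ k := by
        intro k
        refine le_trans (ENNReal.toReal_mono (measure_ne_top _ _)
          (measure_mono (Set.iInter_subset _ k))) (hmarkov k)
      have htend : Tendsto (fun k => Real.exp t * r ^ k) atTop (nhds 0) := by
        have := tendsto_pow_atTop_nhds_zero_of_lt_one hr0 hr1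
        simpa using this.const_mul (Real.exp t)
      have h0 : (P (⋂ k, {ω | S k ω ≤ t})).toReal ≤ 0 :=
        ge_of_tendsto htend (Eventually.of_forall hle)
      have := le_antisymm h0 ENNReal.toReal_nonneg
      rcases (ENNReal.toReal_eq_zero_iff _).1 this with h | h
      · exact h
      · exact absurd h (measure_ne_top _ _)
    rw [ae_iff]
    refine measure_mono_null ?_ hE
    intro ω hω
    simp only [Set.mem_setOf_eq, not_exists, not_lt] at hω
    exact Set.mem_iInter.2 fun k => hω k
  have hG : ∀ᵐ ω ∂P, (∀ i, 0 < ξ i ω) ∧ ∃ k, t < S k ω :=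
    (ae_all_iff.2 hpos).and hNE
  -- pointwise structure on the good set
  have hgood : ∀ ω, (∀ i, 0 < ξ i ω) → (∃ k, t < S k ω) →
      StrictMono (fun k => S k ω) ∧ t < S (N ω) ω ∧ (∀ i, N ω ≤ i ↔ t < S i ω) := by
    intro ω hp hne
    have hmono : StrictMono (fun k => S k ω) := by
      apply strictMono_nat_of_lt_succ
      intro k
      simp only [hS, Finset.sum_range_succ]
      linarith [hp k]
    have hmem : t < S (N ω) ω := by
      have := Nat.sInf_mem (s := {k : ℕ | t < S k ω}) hne
      rw [← hN ω] at this
      exact this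
    refine ⟨hmono, hmem, fun i => ⟨fun h => lt_of_lt_of_le hmem (hmono.monotone h), fun h => ?_⟩⟩
    rw [hN ω]
    exact Nat.sInf_le h
  -- the events
  set A : ℕ → Set Ω := fun i => if i < n then {ω | t < S i ω} else {ω | S i ω ≤ t} with hA
  have hAmeas : ∀ i, MeasurableSet (A i) := by
    intro i
    simp only [hA]
    split
    · exact measurableSet_lt measurable_const (hSmeas i)
    · exact measurableSet_le (hSmeas i) measurable_const
  have hAiff : ∀ ω, (∀ i, 0 < ξ i ω) → (∃ k, t < S k ω) →
      ∀ i, ω ∈ A i ↔ i ∈ Finset.Ico (min (N ω) n) (max (N ω) n) := by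
    intro ω hp hne i
    obtain ⟨hmono, hmem, hle⟩ := hgood ω hp hne
    simp only [hA, Finset.mem_Ico]
    by_cases hi : i < n
    · rw [if_pos hi]
      simp only [Set.mem_setOf_eq]
      constructor
      · intro h
        have hNi := (hle i).2 h
        exact ⟨le_trans (min_le_left _ _) hNi, lt_of_lt_of_le hi (le_max_right _ _)⟩
      · rintro ⟨h1, _⟩
        refine (hle i).1 ?_
        rcases min_le_iff.1 h1 with h | h
        · exact h
        · omega
    · rw [if_neg hi]
      simp only [Set.mem_setOf_eq]
      push_neg at hi
      constructor
      · intro h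
        have hiN : i < N ω := by
          by_contra hcon
          push_neg at hcon
          exact absurd ((hle i).1 hcon) (not_lt.2 h)
        exact ⟨le_trans (min_le_right _ _) hi, lt_of_lt_of_le hiN (le_max_left _ _)⟩
      · rintro ⟨_, h2⟩
        have hiN : i < N ω := by
          rcases lt_max_iff.1 h2 with h | h
          · exact h
          · omega
        have : ¬ N ω ≤ i := not_le.2 hiN
        rw [hle i] at this
        exact not_lt.1 this
  -- Wald identity for each increment
  have hwald : ∀ i, ∫⁻ ω, (A i).indicator (fun ω => ENNReal.ofReal (ξ i ω)) ω ∂P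
      = P (A i) * ENNReal.ofReal μ := by
    intro i
    have hindSξ : ProbabilityTheory.IndepFun (S i) (ξ i) P := by
      have := hindep.indepFun_finset_sum_of_notMem hmeas (s := Finset.range i) (i := i) (by simp)
      convert this using 1
      funext ω; rw [hS]; simp [Finset.sum_apply]
    set B : Set ℝ := if i < n then Set.Ioi t else Set.Iic t with hB
    have hBmeas : MeasurableSet B := by
      rw [hB]; split
      · exact measurableSet_Ioi
      · exact measurableSet_Iic
    have hAB : A i = S i ⁻¹' B := by
      simp only [hA, hB]
      by_cases hi : i < n <;> simp [hi, Set.preimage, Set.Ioi, Set.Iic]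
    set φ : ℝ → ℝ := B.indicator (fun _ => (1:ℝ)) with hφ
    have hφmeas : Measurable φ := measurable_const.indicator hBmeas
    have hind2 : ProbabilityTheory.IndepFun (φ ∘ S i) (ξ i) P :=
      hindSξ.comp hφmeas measurable_id
    have hχeq : (φ ∘ S i) * ξ i = (A i).indicator (ξ i) := by
      funext ω
      by_cases h : ω ∈ A i
      · have hb : S i ω ∈ B := by rw [hAB] at h; exact h
        simp [hφ, Set.indicator_of_mem hb, Set.indicator_of_mem h]
      · have hb : S i ω ∉ B := by rw [hAB] at h; exact h
        simp [hφ, Set.indicator_of_notMem hb, Set.indicator_of_notMem h]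
    have hχint : Integrable (φ ∘ S i) P := by
      refine Integrable.mono' (integrable_const 1) (hφmeas.comp (hSmeas i)).aestronglyMeasurable ?_
      refine ae_of_all _ fun ω => ?_
      rw [Function.comp_apply, hφ]
      by_cases hb : S i ω ∈ B
      · simp [Set.indicator_of_mem hb]
      · simp [Set.indicator_of_notMem hb]
    have hreal : ∫ ω, (A i).indicator (ξ i) ω ∂P = (P (A i)).toReal * μ := by
      rw [← hχeq]
      have := hind2.integral_mul_eq_mul_integral hχint.aestronglyMeasurable (hInt_i i).aestronglyMeasurable
      rw [this, hmean_i i]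
      congr 1
      have : φ ∘ S i = (A i).indicator (fun _ => (1:ℝ)) := by
        funext ω
        by_cases h : ω ∈ A i
        · have hb : S i ω ∈ B := by rw [hAB] at h; exact h
          simp [hφ, Set.indicator_of_mem hb, Set.indicator_of_mem h]
        · have hb : S i ω ∉ B := by rw [hAB] at h; exact h
          simp [hφ, Set.indicator_of_notMem hb, Set.indicator_of_notMem h]
      rw [this, integral_indicator_const _ (hAmeas i)]
      simp [measureReal_def]
    have hnn : 0 ≤ᵐ[P] (A i).indicator (ξ i) := by
      filter_upwards [hpos i] with ω hω
      by_cases h : ω ∈ A i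
      · simp [Set.indicator_of_mem h, hω.le]
      · simp [Set.indicator_of_notMem h]
    have hlhs : ∫⁻ ω, (A i).indicator (fun ω => ENNReal.ofReal (ξ i ω)) ω ∂P
        = ∫⁻ ω, ENNReal.ofReal ((A i).indicator (ξ i) ω) ∂P := by
      apply lintegral_congr fun ω => ?_
      by_cases h : ω ∈ A i
      · simp [Set.indicator_of_mem h]
      · simp [Set.indicator_of_notMem h]
    rw [hlhs, ← ofReal_integral_eq_lintegral_ofReal ((hInt_i i).indicator (hAmeas i)) hnn, hreal,
      ENNReal.ofReal_mul ENNReal.toReal_nonneg, ENNReal.ofReal_toReal (measure_ne_top _ _)]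
  -- summability
  have hsum : ∑' i, P (A i) ≠ ⊤ := by
    have hbound : ∀ i, P (A i) ≤
        (Set.indicator (Set.Iio n) (fun _ => (1:ENNReal)) i)
          + ENNReal.ofReal (Real.exp t * r ^ i) := by
      intro i
      by_cases hi : i < n
      · refine le_trans prob_le_one ?_
        rw [Set.indicator_of_mem (by simpa using hi)]
        exact le_self_add
      · have hAi : A i = {ω | S i ω ≤ t} := by simp only [hA, if_neg hi]
        have : P (A i) = ENNReal.ofReal ((P (A i)).toReal) :=
          (ENNReal.ofReal_toReal (measure_ne_top _ _)).symm
        rw [this, hAi]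
        refine le_trans (ENNReal.ofReal_le_ofReal ?_) le_add_self
        exact hmarkov i
    refine ne_top_of_le_ne_top ?_ (ENNReal.tsum_le_tsum hbound)
    rw [ENNReal.tsum_add]
    refine ENNReal.add_ne_top.2 ⟨?_, ?_⟩
    · have : ∑' i, Set.indicator (Set.Iio n) (fun _ => (1:ENNReal)) i
          = ∑ i ∈ Finset.range n, Set.indicator (Set.Iio n) (fun _ => (1:ENNReal)) i := by
        refine tsum_eq_sum fun i hi => ?_
        rw [Finset.mem_range, not_lt] at hi
        exact Set.indicator_of_notMem (by simpa using not_lt.2 hi) _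
      rw [this]
      exact (lt_of_le_of_lt (Finset.sum_le_sum fun i _ => le_refl _)
        (by
          calc ∑ _i ∈ Finset.range n, Set.indicator (Set.Iio n) (fun _ => (1:ENNReal)) _i
              ≤ ∑ _i ∈ Finset.range n, 1 := Finset.sum_le_sum fun i _ => Set.indicator_le_self' (by simp) i
            _ = n := by simp
            _ < ⊤ := ENNReal.natCast_lt_top n)).ne
    · have hsummable : Summable (fun i => Real.exp t * r ^ i) :=
        (summable_geometric_of_lt_one hr0 hr1).mul_left _
      rw [← ENNReal.ofReal_tsum_of_nonneg
        (fun i => mul_nonneg (Real.exp_pos t).le (pow_nonneg hr0 i)) hsummable]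
      exact ENNReal.ofReal_ne_top
  -- pointwise sum identities
  have hptA : ∀ᵐ ω ∂P, (∀ i, ω ∈ A i ↔ i ∈ Finset.Ico (min (N ω) n) (max (N ω) n))
      ∧ (∀ i, 0 < ξ i ω) ∧ Monotone (fun k => S k ω) := by
    filter_upwards [hG] with ω hω
    exact ⟨hAiff ω hω.1 hω.2, hω.1, (hgood ω hω.1 hω.2).1.monotone⟩
  have hL1 : ∫⁻ ω, ENNReal.ofReal |(N ω : ℝ) - n| ∂P = ∑' i, P (A i) := by
    have hpt : ∀ᵐ ω ∂P, ENNReal.ofReal |(N ω : ℝ) - n|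
        = ∑' i, (A i).indicator (fun _ => (1:ENNReal)) ω := by
      filter_upwards [hptA] with ω hω
      have hsum_eq : ∑' i, (A i).indicator (fun _ => (1:ENNReal)) ω
          = ∑ i ∈ Finset.Ico (min (N ω) n) (max (N ω) n),
              (A i).indicator (fun _ => (1:ENNReal)) ω := by
        refine tsum_eq_sum fun i hi => ?_
        exact Set.indicator_of_notMem (fun hmem => hi ((hω.1 i).1 hmem)) _
      rw [hsum_eq]
      have : ∑ i ∈ Finset.Ico (min (N ω) n) (max (N ω) n),
          (A i).indicator (fun _ => (1:ENNReal)) ω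
          = ∑ _i ∈ Finset.Ico (min (N ω) n) (max (N ω) n), (1:ENNReal) := by
        refine Finset.sum_congr rfl fun i hi => ?_
        exact Set.indicator_of_mem ((hω.1 i).2 hi) _
      rw [this, Finset.sum_const, Nat.card_Ico, nsmul_eq_mul, mul_one]
      have habs : |(N ω : ℝ) - n| = ((max (N ω) n - min (N ω) n : ℕ) : ℝ) := by
        rcases le_total (N ω) n with h | h
        · rw [max_eq_right h, min_eq_left h, abs_of_nonpos (by
            simp only [sub_nonpos]; exact_mod_cast h)]
          push_cast [h]
          ring
        · rw [max_eq_left h, min_eq_right h, abs_of_nonneg (by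
            simp only [sub_nonneg]; exact_mod_cast h)]
          push_cast [h]
          ring
      rw [habs, ENNReal.ofReal_natCast]
    rw [lintegral_congr_ae hpt,
      lintegral_tsum (f := fun i => (A i).indicator fun _ => (1:ENNReal))
        fun i => (measurable_const.indicator (hAmeas i)).aemeasurable]
    congr 1
    funext i
    rw [show ((A i).indicator fun _ => (1:ENNReal)) = (A i).indicator 1 from rfl,
      lintegral_indicator_one (hAmeas i)]
  have hL2 : ∫⁻ ω, ENNReal.ofReal (S (max (N ω) n) ω - S (min (N ω) n) ω) ∂P
      = (∑' i, P (A i)) * ENNReal.ofReal μ := by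
    have hpt : ∀ᵐ ω ∂P, ENNReal.ofReal (S (max (N ω) n) ω - S (min (N ω) n) ω)
        = ∑' i, (A i).indicator (fun ω' => ENNReal.ofReal (ξ i ω')) ω := by
      filter_upwards [hptA] with ω hω
      have hsum_eq : ∑' i, (A i).indicator (fun ω' => ENNReal.ofReal (ξ i ω')) ω
          = ∑ i ∈ Finset.Ico (min (N ω) n) (max (N ω) n),
              (A i).indicator (fun ω' => ENNReal.ofReal (ξ i ω')) ω := by
        refine tsum_eq_sum fun i hi => ?_
        exact Set.indicator_of_notMem (fun hmem => hi ((hω.1 i).1 hmem)) _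
      rw [hsum_eq]
      have h2 : ∑ i ∈ Finset.Ico (min (N ω) n) (max (N ω) n),
          (A i).indicator (fun ω' => ENNReal.ofReal (ξ i ω')) ω
          = ∑ i ∈ Finset.Ico (min (N ω) n) (max (N ω) n), ENNReal.ofReal (ξ i ω) := by
        refine Finset.sum_congr rfl fun i hi => ?_
        exact Set.indicator_of_mem ((hω.1 i).2 hi) _
      rw [h2, ← ENNReal.ofReal_sum_of_nonneg fun i _ => (hω.2.1 i).le]
      congr 1
      rw [hS, hS, Finset.sum_Ico_eq_sub _ (min_le_max)]
    rw [lintegral_congr_ae hpt,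
      lintegral_tsum (f := fun i => (A i).indicator fun ω' => ENNReal.ofReal (ξ i ω'))
        fun i => ((ENNReal.measurable_ofReal.comp (hmeas i)).indicator (hAmeas i)).aemeasurable]
    rw [← ENNReal.tsum_mul_right]
    congr 1
    funext i
    exact hwald i
  -- real versions
  have habs_nonneg : ∀ᵐ ω ∂P, 0 ≤ |(N ω : ℝ) - n| := ae_of_all _ fun ω => abs_nonneg _
  have hD_nonneg : ∀ᵐ ω ∂P, 0 ≤ S (max (N ω) n) ω - S (min (N ω) n) ω := by
    filter_upwards [hG] with ω hω
    exact sub_nonneg.2 ((hgood ω hω.1 hω.2).1.monotone min_le_max)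
  have hNabs_meas : Measurable fun ω => |(N ω : ℝ) - n| :=
    ((measurable_from_top.comp hNmeas : Measurable fun ω => (N ω:ℝ)).sub measurable_const).abs
  have hD_meas : Measurable fun ω => S (max (N ω) n) ω - S (min (N ω) n) ω :=
    (hSNmeas _ (hNmeas.max measurable_const)).sub (hSNmeas _ (hNmeas.min measurable_const))
  have hI1 : ∫ ω, |(N ω : ℝ) - n| ∂P = (∑' i, P (A i)).toReal := by
    rw [integral_eq_lintegral_of_nonneg_ae habs_nonneg hNabs_meas.aestronglyMeasurable, hL1]
  have hI2 : ∫ ω, (S (max (N ω) n) ω - S (min (N ω) n) ω) ∂P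
      = (∑' i, P (A i)).toReal * μ := by
    rw [integral_eq_lintegral_of_nonneg_ae hD_nonneg hD_meas.aestronglyMeasurable, hL2,
      ENNReal.toReal_mul, ENNReal.toReal_ofReal hμpos.le]
  have hpart1 : μ * ∫ ω, |(N ω : ℝ) - n| ∂P
      = ∫ ω, (S (max (N ω) n) ω - S (min (N ω) n) ω) ∂P := by
    rw [hI1, hI2]; ring
  -- integrability of the pieces
  have hD_int : Integrable (fun ω => S (max (N ω) n) ω - S (min (N ω) n) ω) P := by
    refine ⟨hD_meas.aestronglyMeasurable, ?_⟩
    rw [hasFiniteIntegral_iff_norm]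
    have : ∫⁻ ω, ENNReal.ofReal ‖S (max (N ω) n) ω - S (min (N ω) n) ω‖ ∂P
        = ∫⁻ ω, ENNReal.ofReal (S (max (N ω) n) ω - S (min (N ω) n) ω) ∂P := by
      refine lintegral_congr_ae ?_
      filter_upwards [hD_nonneg] with ω hω
      rw [Real.norm_eq_abs, abs_of_nonneg hω]
    rw [this, hL2]
    exact ENNReal.mul_lt_top (lt_of_le_of_ne le_top hsum) ENNReal.ofReal_lt_top
  have hSn_int : Integrable (S n) P := by
    have : S n = fun ω => ∑ i ∈ Finset.range n, ξ i ω := funext fun ω => hS n ω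
    rw [this]
    exact integrable_finset_sum _ fun i _ => hInt_i i
  have hSN_int : Integrable (fun ω => S (N ω) ω) P := by
    refine Integrable.mono' (hSn_int.add hD_int)
      (hSNmeas N hNmeas).aestronglyMeasurable ?_
    filter_upwards [hG] with ω hω
    obtain ⟨hmono, _, _⟩ := hgood ω hω.1 hω.2
    have h1 : 0 ≤ S (N ω) ω := by
      have : S 0 ω = 0 := by rw [hS]; simp
      rw [← this]
      exact hmono.monotone (Nat.zero_le _)
    have h2 : S (N ω) ω ≤ S (max (N ω) n) ω := hmono.monotone (le_max_left _ _)
    have h3 : S (min (N ω) n) ω ≤ S n ω := hmono.monotone (min_le_right _ _)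
    rw [Real.norm_eq_abs, abs_of_nonneg h1]
    simp only [Pi.add_apply]
    linarith
  have habs_int : Integrable (fun ω => |S n ω - t|) P := (hSn_int.sub (integrable_const t)).abs
  have hSNt_int : Integrable (fun ω => S (N ω) ω - t) P := hSN_int.sub (integrable_const t)
  -- pointwise sandwich
  have hsandwich : ∀ᵐ ω ∂P,
      |S n ω - t| - (S (N ω) ω - t) ≤ S (max (N ω) n) ω - S (min (N ω) n) ω
      ∧ S (max (N ω) n) ω - S (min (N ω) n) ω ≤ |S n ω - t| + (S (N ω) ω - t) := by
    filter_upwards [hG] with ω hω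
    obtain ⟨hmono, hmem, _⟩ := hgood ω hω.1 hω.2
    rcases le_total (N ω) n with h | h
    · rw [max_eq_right h, min_eq_left h]
      have hle : S (N ω) ω ≤ S n ω := hmono.monotone h
      rcases abs_cases (S n ω - t) with ⟨he, _⟩ | ⟨he, _⟩ <;> rw [he] <;> constructor <;> linarith
    · rw [max_eq_left h, min_eq_right h]
      have hle : S n ω ≤ S (N ω) ω := hmono.monotone h
      rcases abs_cases (S n ω - t) with ⟨he, _⟩ | ⟨he, _⟩ <;> rw [he] <;> constructor <;> linarith
  have hIle : ∫ ω, (S (max (N ω) n) ω - S (min (N ω) n) ω) ∂P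
      ≤ ∫ ω, (|S n ω - t| + (S (N ω) ω - t)) ∂P := by
    refine integral_mono_ae hD_int (habs_int.add hSNt_int) ?_
    filter_upwards [hsandwich] with ω hω
    exact hω.2
  have hIge : ∫ ω, (|S n ω - t| - (S (N ω) ω - t)) ∂P
      ≤ ∫ ω, (S (max (N ω) n) ω - S (min (N ω) n) ω) ∂P := by
    refine integral_mono_ae (habs_int.sub hSNt_int) hD_int ?_
    filter_upwards [hsandwich] with ω hω
    exact hω.1
  have hexpand1 : ∫ ω, (|S n ω - t| + (S (N ω) ω - t)) ∂P
      = (∫ ω, |S n ω - t| ∂P) + ((∫ ω, S (N ω) ω ∂P) - t) := by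
    rw [integral_add habs_int hSNt_int, integral_sub hSN_int (integrable_const t)]
    simp
  have hexpand2 : ∫ ω, (|S n ω - t| - (S (N ω) ω - t)) ∂P
      = (∫ ω, |S n ω - t| ∂P) - ((∫ ω, S (N ω) ω ∂P) - t) := by
    rw [integral_sub habs_int hSNt_int, integral_sub hSN_int (integrable_const t)]
    simp
  refine ⟨hpart1, ?_, ?_⟩
  · rw [hpart1]
    rw [hexpand2] at hIge
    exact hIge
  · rw [hpart1]
    rw [hexpand1] at hIle
    exact hIle

theorem wald_sandwich_renewal
    {Ω : Type*} [MeasurableSpace Ω] (P : Measure Ω) [IsProbabilityMeasure P]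
    (ξ : ℕ → Ω → ℝ) (hmeas : ∀ i, Measurable (ξ i))
    (hindep : ProbabilityTheory.iIndepFun ξ P)
    (hident : ∀ i, P.map (ξ i) = P.map (ξ 0))
    (hpos : ∀ i, ∀ᵐ ω ∂P, 0 < ξ i ω)
    (hInt : Integrable (ξ 0) P)
    (μ : ℝ) (hμpos : 0 < μ) (hmean : ∫ ω, ξ 0 ω ∂P = μ)
    (n : ℕ) :
    (μ * ∫ ω, |((sInf {k : ℕ | μ * n < ∑ i ∈ Finset.range k, ξ i ω} : ℕ) : ℝ) - n| ∂P =
      ∫ ω, ((∑ i ∈ Finset.range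
          (max (sInf {k : ℕ | μ * n < ∑ i ∈ Finset.range k, ξ i ω}) n), ξ i ω) -
        (∑ i ∈ Finset.range
          (min (sInf {k : ℕ | μ * n < ∑ i ∈ Finset.range k, ξ i ω}) n), ξ i ω)) ∂P) ∧
    ((∫ ω, |(∑ i ∈ Finset.range n, ξ i ω) - μ * n| ∂P) -
        ((∫ ω, (∑ i ∈ Finset.range
            (sInf {k : ℕ | μ * n < ∑ i ∈ Finset.range k, ξ i ω}), ξ i ω) ∂P) - μ * n) ≤
      μ * ∫ ω, |((sInf {k : ℕ | μ * n < ∑ i ∈ Finset.range k, ξ i ω} : ℕ) : ℝ) - n| ∂P) ∧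
    (μ * ∫ ω, |((sInf {k : ℕ | μ * n < ∑ i ∈ Finset.range k, ξ i ω} : ℕ) : ℝ) - n| ∂P ≤
      (∫ ω, |(∑ i ∈ Finset.range n, ξ i ω) - μ * n| ∂P) +
        ((∫ ω, (∑ i ∈ Finset.range
            (sInf {k : ℕ | μ * n < ∑ i ∈ Finset.range k, ξ i ω}), ξ i ω) ∂P) - μ * n)) :=
  wald_aux P ξ hmeas hindep hident hpos hInt μ hμpos hmean n
    (fun k ω => ∑ i ∈ Finset.range k, ξ i ω) (fun _ _ => rfl)
    (fun ω => sInf {k : ℕ | μ * n < ∑ i ∈ Finset.range k, ξ i ω}) (fun _ => rfl)
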